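/- Let 0 ≤ μ < 1, let e₁, e₂ > 0, and let A > 0. Suppose a nonnegative function φ defined for small positive r satisfies φ(r) ≤ A (r^{e₁} φ(r)^μ + r^{e₂}) for all sufficiently small r > 0. Then there exists a constant C > 0 such that φ(r) ≤ C r^{min(e₂, e₁/(1-μ))} for all sufficiently small r > 0. -/

import Mathlib

theorem asymptotic_bound_of_sublinear (μ e₁ e₂ A : ℝ) (φ : ℝ → ℝ)
    (hμ0 : 0 ≤ μ) (hμ1 : μ < 1) (he₁ : 0 < e₁) (he₂ : 0 < e₂) (hA : 0 < A)
    (hφ : ∃ r₀ > 0, ∀ r, 0 < r → r < r₀ →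
      0 ≤ φ r ∧ φ r ≤ A * (r ^ e₁ * (φ r) ^ μ + r ^ e₂)) :
    ∃ C > 0, ∃ r₁ > 0, ∀ r, 0 < r → r < r₁ →
      φ r ≤ C * r ^ (min e₂ (e₁ / (1 - μ))) := by
  obtain ⟨r₀, hr₀, h⟩ := hφ
  have hμ : 0 < 1 - μ := by linarith
  have h2A : (0:ℝ) < 2 * A := by linarith
  set β := min e₂ (e₁ / (1 - μ)) with hβ
  refine ⟨(2*A) ^ (1/(1-μ)) + 2*A, by positivity, min r₀ 1, by positivity, ?_⟩
  intro r hr hrlt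
  have hr1 : r < 1 := lt_of_lt_of_le hrlt (min_le_right _ _)
  have hrr₀ : r < r₀ := lt_of_lt_of_le hrlt (min_le_left _ _)
  obtain ⟨hφ0, hineq⟩ := h r hr hrr₀
  have hrβ : (0:ℝ) < r ^ β := Real.rpow_pos_of_pos hr β
  have hβe₂ : β ≤ e₂ := min_le_left _ _
  have hβe₁ : β ≤ e₁ / (1 - μ) := min_le_right _ _
  rcases le_or_gt (A * (r ^ e₁ * (φ r) ^ μ)) (A * r ^ e₂) with hc | hc
  · -- φ r ≤ 2A r^e₂ ≤ 2A r^β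
    have h1 : φ r ≤ 2 * A * r ^ e₂ := by nlinarith [hineq]
    have h2 : r ^ e₂ ≤ r ^ β :=
      Real.rpow_le_rpow_of_exponent_ge hr hr1.le hβe₂
    have : φ r ≤ 2 * A * r ^ β := le_trans h1 (by nlinarith)
    nlinarith [Real.rpow_pos_of_pos h2A (1/(1-μ))]
  · -- φ r ≤ 2A r^e₁ φ^μ
    have h1 : φ r ≤ 2 * A * (r ^ e₁ * (φ r) ^ μ) := by nlinarith [hineq]
    rcases eq_or_lt_of_le hφ0 with h0 | hpos
    · rw [← h0]
      positivity
    · have hφμ : (0:ℝ) < (φ r) ^ μ := Real.rpow_pos_of_pos hpos μ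
      have key : (φ r) ^ (1 - μ) ≤ 2 * A * r ^ e₁ := by
        have hsplit : φ r = (φ r) ^ (1 - μ) * (φ r) ^ μ := by
          rw [← Real.rpow_add hpos]
          simp
        rw [hsplit] at h1
        have := (mul_le_mul_iff_of_pos_right hφμ).mp (by linarith [h1] : (φ r) ^ (1-μ) * (φ r) ^ μ ≤ (2 * A * r ^ e₁) * (φ r) ^ μ)
        exact this
      have key2 : φ r ≤ (2 * A * r ^ e₁) ^ (1/(1-μ)) := by
        have := Real.rpow_le_rpow (by positivity) key (by positivity : (0:ℝ) ≤ 1/(1-μ))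
        rwa [← Real.rpow_mul hφ0, mul_one_div, div_self hμ.ne',
          Real.rpow_one] at this
      have heq : (2 * A * r ^ e₁) ^ (1/(1-μ))
          = (2*A) ^ (1/(1-μ)) * r ^ (e₁/(1-μ)) := by
        rw [Real.mul_rpow h2A.le (by positivity), ← Real.rpow_mul hr.le,
          mul_one_div]
      have h2 : r ^ (e₁/(1-μ)) ≤ r ^ β :=
        Real.rpow_le_rpow_of_exponent_ge hr hr1.le hβe₁
      have hCpos : (0:ℝ) < (2*A) ^ (1/(1-μ)) := Real.rpow_pos_of_pos h2A _
      calc φ r ≤ (2*A) ^ (1/(1-μ)) * r ^ (e₁/(1-μ)) := by rw [← heq]; exact key2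
        _ ≤ (2*A) ^ (1/(1-μ)) * r ^ β := by nlinarith
        _ ≤ ((2*A) ^ (1/(1-μ)) + 2*A) * r ^ β := by nlinarith
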